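/- Let k ≥ 3 be an integer and θ = 360°/k (i.e. θ = 2π/k radians). Define f(r) = ∑_{n=0}^{k} r^n cos(nθ) + (r^{k+1} cos(θ) + r^{k+2} - 1 - r cos θ)/(1-r²) for 0 < r < 1. Then lim_{r→1⁻} f(r) = -(k/2)(1 + cos θ). -/

import Mathlib

open Real Filter

lemma sumcos_aux (k : ℕ) (hk : 3 ≤ k) :
    ∑ n ∈ Finset.range k, Real.cos (n * (2 * π / k)) = 0 := by
  have hkR : (0:ℝ) < k := by exact_mod_cast Nat.lt_of_lt_of_le (by norm_num) hk
  set z : ℂ := Complex.exp ((2 * π / k : ℝ) * Complex.I) with hz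
  have h1 : z ≠ 1 := by
    rw [hz, Ne, Complex.exp_eq_one_iff]
    rintro ⟨n, hn⟩
    have him := congrArg Complex.im hn
    simp [Complex.mul_im] at him
    -- him : 2 * π / k = n * (2 * π)
    have hπ := Real.pi_pos
    have hnk : (n : ℝ) * k = 1 := by
      field_simp at him
      nlinarith [him]
    rcases le_or_gt n 0 with h | h
    · have : (n:ℝ) ≤ 0 := by exact_mod_cast h
      nlinarith
    · have : (1:ℝ) ≤ (n:ℝ) := by exact_mod_cast h
      have hk3 : (3:ℝ) ≤ k := by exact_mod_cast hk
      nlinarith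
  have h2 : z ^ k = 1 := by
    rw [hz, ← Complex.exp_nat_mul]
    have hkC : (k:ℂ) ≠ 0 := by
      exact_mod_cast hkR.ne'
    have : (k : ℂ) * ((2 * π / k : ℝ) * Complex.I) = 2 * π * Complex.I := by
      push_cast
      field_simp
    rw [this]
    simpa using Complex.exp_int_mul_two_pi_mul_I 1
  have hsum : ∑ n ∈ Finset.range k, z ^ n = 0 := by
    rw [geom_sum_eq h1, h2]
    simp
  have hre : ∀ n : ℕ, Real.cos (n * (2 * π / k)) = (z ^ n).re := by
    intro n
    rw [hz, ← Complex.exp_nat_mul, ← Complex.exp_ofReal_mul_I_re]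
    push_cast
    ring_nf
  calc ∑ n ∈ Finset.range k, Real.cos (n * (2 * π / k))
      = (∑ n ∈ Finset.range k, z ^ n).re := by rw [Complex.re_sum]; exact Finset.sum_congr rfl fun n _ => hre n
    _ = 0 := by rw [hsum]; simp


theorem stmt4 (k : ℕ) (hk : 3 ≤ k) (θ : ℝ) (hθ : θ = 2 * π / k) :
    Filter.Tendsto
      (fun r : ℝ =>
        (∑ n ∈ Finset.range (k + 1), r ^ n * Real.cos (n * θ))
          + (r ^ (k + 1) * Real.cos θ + r ^ (k + 2) - 1 - r * Real.cos θ) / (1 - r ^ 2))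
      (nhdsWithin 1 (Set.Iio 1))
      (nhds (-(k / 2 : ℝ) * (1 + Real.cos θ))) := by
  have hkR : (0:ℝ) < k := by exact_mod_cast Nat.lt_of_lt_of_le (by norm_num) hk
  set g : ℝ → ℝ := fun r =>
    (∑ n ∈ Finset.range (k + 1), r ^ n * Real.cos (n * θ))
      - (Real.cos θ * (r * ∑ i ∈ Finset.range k, r ^ i) + ∑ i ∈ Finset.range (k + 2), r ^ i) / (1 + r)
    with hgdef
  have hev : (fun r : ℝ =>
        (∑ n ∈ Finset.range (k + 1), r ^ n * Real.cos (n * θ))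
          + (r ^ (k + 1) * Real.cos θ + r ^ (k + 2) - 1 - r * Real.cos θ) / (1 - r ^ 2))
      =ᶠ[nhdsWithin 1 (Set.Iio 1)] g := by
    have h0 : ∀ᶠ r in nhdsWithin 1 (Set.Iio 1), (0:ℝ) < r :=
      eventually_nhdsWithin_of_eventually_nhds (eventually_gt_nhds (by norm_num))
    have h1 : ∀ᶠ r in nhdsWithin (1:ℝ) (Set.Iio 1), r < 1 := eventually_mem_nhdsWithin
    filter_upwards [h0, h1] with r hr0 hr1
    have h2 : 1 - r ^ 2 ≠ 0 := by nlinarith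
    have h3 : 1 + r ≠ 0 := by nlinarith
    have hS1 := geom_sum_mul r k
    have hS2 := geom_sum_mul r (k + 2)
    simp only [hgdef]
    field_simp
    simp only [mul_comm θ]
    linear_combination (-(1 + r)) * (Real.cos θ * r * hS1 + hS2)
  have hval : g 1 = -(k / 2 : ℝ) * (1 + Real.cos θ) := by
    have hsum : ∑ n ∈ Finset.range (k + 1), Real.cos (n * θ) = 1 := by
      rw [Finset.sum_range_succ, hθ, sumcos_aux k hk]
      have : (k:ℝ) * (2 * π / k) = 2 * π := by field_simp
      rw [this, Real.cos_two_pi]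
      norm_num
    simp only [hgdef, one_pow, one_mul, Finset.sum_const, Finset.card_range, smul_eq_mul, mul_one,
      hsum]
    field_simp
    ring
  have hc : ContinuousAt g 1 := by
    apply ContinuousAt.sub
    · fun_prop
    · exact ContinuousAt.div (by fun_prop) (by fun_prop) (by norm_num)
  have := (hc.continuousWithinAt (s := Set.Iio 1)).tendsto
  rw [hval] at this
  exact this.congr' hev.symm
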